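/- arXiv:1708.00125 — 3 statements merged into one kernel-verified Lean document; each statement's English description precedes it below -/
import Mathlib

section
/- The graph obtained from C_5[2K_1] (the lexicographic product of C_5 with the empty graph on 2 vertices) by deleting one vertex is triangle-free and vertex-arrows (P_3, P_3); hence F_v(J_3, J_3; 3) ≤ 9. -/
open SimpleGraph

/-- `Copies G F S`: `G` contains a copy of `F` all of whose vertices lie in `S`. -/
def Copies {α β : Type*} (G : SimpleGraph α) (F : SimpleGraph β) (S : Set α) : Prop :=
  ∃ f : β ↪ α, (∀ a b, F.Adj a b → G.Adj (f a) (f b)) ∧ ∀ a, f a ∈ S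

/-- `G` vertex-arrows the family `F` of graphs. -/
def VArrows {α : Type*} (G : SimpleGraph α) {r : ℕ} {β : Fin r → Type*}
    (F : ∀ i, SimpleGraph (β i)) : Prop :=
  ∀ C : α → Fin r, ∃ i, Copies G (F i) {v | C v = i}

/-- `G` vertex-arrows `(F1, F2)`. -/
def VArrows2 {α β γ : Type*} (G : SimpleGraph α) (F1 : SimpleGraph β) (F2 : SimpleGraph γ) :
    Prop :=
  ∀ C : α → Bool, Copies G F1 {v | C v = true} ∨ Copies G F2 {v | C v = false}

/-- `G` edge-arrows `(F1, F2)`: every red subgraph `R ≤ G` yields a red `F1` or a blue `F2`. -/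
def EArrows2 {α β γ : Type*} (G : SimpleGraph α) (F1 : SimpleGraph β) (F2 : SimpleGraph γ) :
    Prop :=
  ∀ R : SimpleGraph α, R ≤ G → Copies R F1 Set.univ ∨ Copies (G \ R) F2 Set.univ

/-- Vertex Folkman number for a family of target graphs. -/
noncomputable def Fv {r : ℕ} {β : Fin r → Type*} (F : ∀ i, SimpleGraph (β i)) (k : ℕ) : ℕ :=
  sInf {n | ∃ G : SimpleGraph (Fin n), G.CliqueFree k ∧ VArrows G F}

/-- Two-color vertex Folkman number. -/
noncomputable def Fv2 {β γ : Type*} (F1 : SimpleGraph β) (F2 : SimpleGraph γ) (k : ℕ) : ℕ :=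
  sInf {n | ∃ G : SimpleGraph (Fin n), G.CliqueFree k ∧ VArrows2 G F1 F2}

/-- Two-color edge Folkman number. -/
noncomputable def Fe2 {β γ : Type*} (F1 : SimpleGraph β) (F2 : SimpleGraph γ) (k : ℕ) : ℕ :=
  sInf {n | ∃ G : SimpleGraph (Fin n), G.CliqueFree k ∧ EArrows2 G F1 F2}

/-- Lexicographic product `G[H]`. -/
def lexProd {α β : Type*} (G : SimpleGraph α) (H : SimpleGraph β) : SimpleGraph (α × β) where
  Adj x y := G.Adj x.1 y.1 ∨ (x.1 = y.1 ∧ H.Adj x.2 y.2)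
  symm := ⟨by rintro x y (h | ⟨e, h⟩); exacts [Or.inl h.symm, Or.inr ⟨e.symm, h.symm⟩]⟩
  loopless := ⟨by rintro x (h | ⟨_, h⟩); exacts [G.loopless.irrefl _ h, H.loopless.irrefl _ h]⟩

/-- Complete graph on `k` vertices. -/
def Kc (k : ℕ) : SimpleGraph (Fin k) := completeGraph (Fin k)

/-- `J_k = K_k - e`: complete graph on `k` vertices minus one edge (the one
joining the two distinguished right-hand vertices). -/
def Jgraph (k : ℕ) : SimpleGraph (Fin (k - 2) ⊕ Fin 2) where
  Adj x y := x ≠ y ∧ ¬(x.isRight ∧ y.isRight)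
  symm := ⟨fun x y ⟨h1, h2⟩ => ⟨h1.symm, fun ⟨a, b⟩ => h2 ⟨b, a⟩⟩⟩
  loopless := ⟨fun x h => h.1 rfl⟩

/-- Cycle on `n` vertices. -/
def cycle (n : ℕ) : SimpleGraph (ZMod n) where
  Adj i j := i ≠ j ∧ (i - j = 1 ∨ j - i = 1)
  symm := ⟨fun i j ⟨h1, h2⟩ => ⟨h1.symm, h2.symm⟩⟩
  loopless := ⟨fun i h => h.1 rfl⟩

/-- Join of two graphs: disjoint union plus all cross edges. -/
def graphJoin {α β : Type*} (G : SimpleGraph α) (H : SimpleGraph β) :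
    SimpleGraph (α ⊕ β) where
  Adj x y := (∃ a b, x = .inl a ∧ y = .inl b ∧ G.Adj a b) ∨
             (∃ a b, x = .inr a ∧ y = .inr b ∧ H.Adj a b) ∨
             (x.isLeft ∧ y.isRight) ∨ (x.isRight ∧ y.isLeft)
  symm := ⟨by
    rintro x y (⟨a, b, rfl, rfl, h⟩ | ⟨a, b, rfl, rfl, h⟩ | ⟨h1, h2⟩ | ⟨h1, h2⟩)
    · exact Or.inl ⟨b, a, rfl, rfl, h.symm⟩
    · exact Or.inr (Or.inl ⟨b, a, rfl, rfl, h.symm⟩)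
    · exact Or.inr (Or.inr (Or.inr ⟨h2, h1⟩))
    · exact Or.inr (Or.inr (Or.inl ⟨h2, h1⟩))⟩
  loopless := ⟨by
    rintro x (⟨a, b, rfl, h, h'⟩ | ⟨a, b, rfl, h, h'⟩ | ⟨h1, h2⟩ | ⟨h1, h2⟩)
    · cases h; exact G.loopless.irrefl _ h'
    · cases h; exact H.loopless.irrefl _ h'
    · cases x <;> simp_all
    · cases x <;> simp_all⟩

/-- Clique number: the largest size of a clique. -/
noncomputable def cliqueNum' {α : Type*} (G : SimpleGraph α) : ℕ :=
  sSup {n | ∃ s : Finset α, G.IsNClique n s}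

namespace FvAux

instance : DecidableRel (cycle 5).Adj :=
  fun i j => inferInstanceAs (Decidable (i ≠ j ∧ (i - j = 1 ∨ j - i = 1)))

instance {α β : Type*} (G : SimpleGraph α) (H : SimpleGraph β) [DecidableRel G.Adj]
    [DecidableRel H.Adj] [DecidableEq α] : DecidableRel (lexProd G H).Adj :=
  fun x y => inferInstanceAs (Decidable (G.Adj x.1 y.1 ∨ (x.1 = y.1 ∧ H.Adj x.2 y.2)))

abbrev V : Type := ZMod 5 × Fin 2
abbrev BigG : SimpleGraph V := lexProd (cycle 5) (⊥ : SimpleGraph (Fin 2))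

def vertsL : List V := [(0,0),(0,1),(1,0),(1,1),(2,0),(2,1),(3,0),(3,1),(4,0),(4,1)]

def nbrPairs (u : V) : List (V × V) :=
  let i := u.1
  [((i+1,0),(i+1,1)), ((i+1,0),(i-1,0)), ((i+1,0),(i-1,1)),
   ((i+1,1),(i-1,0)), ((i+1,1),(i-1,1)), ((i-1,0),(i-1,1))]

def idx (v : V) : Nat := v.1.val * 2 + v.2.val

def colB (m : Nat) (v : V) : Bool := m / 2 ^ idx v % 2 == 1

def colOK (x : V) (m : Nat) : Bool :=
  vertsL.any fun u => u != x && (nbrPairs u).any fun p =>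
    p.1 != x && p.2 != x && colB m p.1 == colB m u && colB m p.2 == colB m u

set_option maxRecDepth 100000 in
set_option maxHeartbeats 4000000 in
theorem allOK : (vertsL.all fun x => (List.range 1024).all fun m => colOK x m) = true := by
  decide

theorem mem_verts (x : V) : x ∈ vertsL := by revert x; decide

set_option maxHeartbeats 1000000 in
theorem pair_facts : ∀ u : V, ∀ p ∈ nbrPairs u,
    p.1 ≠ p.2 ∧ BigG.Adj u p.1 ∧ BigG.Adj u p.2 := by decide

set_option maxHeartbeats 1000000 in
theorem no_tri : ∀ a b c : V, ¬(BigG.Adj a b ∧ BigG.Adj a c ∧ BigG.Adj b c) := by decide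

def maskOf (D : V → Bool) : Nat :=
  (cond (D (0,0)) 1 0) + 2 * (cond (D (0,1)) 1 0) + 4 * (cond (D (1,0)) 1 0) +
  8 * (cond (D (1,1)) 1 0) + 16 * (cond (D (2,0)) 1 0) + 32 * (cond (D (2,1)) 1 0) +
  64 * (cond (D (3,0)) 1 0) + 128 * (cond (D (3,1)) 1 0) + 256 * (cond (D (4,0)) 1 0) +
  512 * (cond (D (4,1)) 1 0)

theorem cond_le_one (b : Bool) : (cond b 1 0 : Nat) ≤ 1 := by cases b <;> simp

theorem maskOf_lt (D : V → Bool) : maskOf D < 1024 := by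
  have h0 := cond_le_one (D (0,0)); have h1 := cond_le_one (D (0,1))
  have h2 := cond_le_one (D (1,0)); have h3 := cond_le_one (D (1,1))
  have h4 := cond_le_one (D (2,0)); have h5 := cond_le_one (D (2,1))
  have h6 := cond_le_one (D (3,0)); have h7 := cond_le_one (D (3,1))
  have h8 := cond_le_one (D (4,0)); have h9 := cond_le_one (D (4,1))
  unfold maskOf; omega

theorem bits (b0 b1 b2 b3 b4 b5 b6 b7 b8 b9 : Nat)
    (h0 : b0 ≤ 1) (h1 : b1 ≤ 1) (h2 : b2 ≤ 1) (h3 : b3 ≤ 1) (h4 : b4 ≤ 1)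
    (h5 : b5 ≤ 1) (h6 : b6 ≤ 1) (h7 : b7 ≤ 1) (h8 : b8 ≤ 1) (h9 : b9 ≤ 1) :
    let S := b0 + 2*b1 + 4*b2 + 8*b3 + 16*b4 + 32*b5 + 64*b6 + 128*b7 + 256*b8 + 512*b9
    S / 1 % 2 = b0 ∧ S / 2 % 2 = b1 ∧ S / 4 % 2 = b2 ∧ S / 8 % 2 = b3 ∧ S / 16 % 2 = b4 ∧
    S / 32 % 2 = b5 ∧ S / 64 % 2 = b6 ∧ S / 128 % 2 = b7 ∧ S / 256 % 2 = b8 ∧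
    S / 512 % 2 = b9 := by
  intro S; unfold S; omega

theorem colB_maskOf (D : V → Bool) (v : V) : colB (maskOf D) v = D v := by
  have H := bits (cond (D (0,0)) 1 0) (cond (D (0,1)) 1 0) (cond (D (1,0)) 1 0)
    (cond (D (1,1)) 1 0) (cond (D (2,0)) 1 0) (cond (D (2,1)) 1 0) (cond (D (3,0)) 1 0)
    (cond (D (3,1)) 1 0) (cond (D (4,0)) 1 0) (cond (D (4,1)) 1 0)
    (cond_le_one _) (cond_le_one _) (cond_le_one _) (cond_le_one _) (cond_le_one _)
    (cond_le_one _) (cond_le_one _) (cond_le_one _) (cond_le_one _) (cond_le_one _)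
  obtain ⟨e0, e1, e2, e3, e4, e5, e6, e7, e8, e9⟩ := H
  have key : ∀ w ∈ vertsL, colB (maskOf D) w = D w := by
    intro w hw
    fin_cases hw
    · show (maskOf D / 2 ^ idx ((0:ZMod 5),(0:Fin 2)) % 2 == 1) = D _
      rw [show maskOf D / 2 ^ idx ((0:ZMod 5),(0:Fin 2)) % 2 = cond (D ((0:ZMod 5),(0:Fin 2))) 1 0 from e0]
      cases D ((0:ZMod 5),(0:Fin 2)) <;> rfl
    · show (maskOf D / 2 ^ idx ((0:ZMod 5),(1:Fin 2)) % 2 == 1) = D _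
      rw [show maskOf D / 2 ^ idx ((0:ZMod 5),(1:Fin 2)) % 2 = cond (D ((0:ZMod 5),(1:Fin 2))) 1 0 from e1]
      cases D ((0:ZMod 5),(1:Fin 2)) <;> rfl
    · show (maskOf D / 2 ^ idx ((1:ZMod 5),(0:Fin 2)) % 2 == 1) = D _
      rw [show maskOf D / 2 ^ idx ((1:ZMod 5),(0:Fin 2)) % 2 = cond (D ((1:ZMod 5),(0:Fin 2))) 1 0 from e2]
      cases D ((1:ZMod 5),(0:Fin 2)) <;> rfl
    · show (maskOf D / 2 ^ idx ((1:ZMod 5),(1:Fin 2)) % 2 == 1) = D _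
      rw [show maskOf D / 2 ^ idx ((1:ZMod 5),(1:Fin 2)) % 2 = cond (D ((1:ZMod 5),(1:Fin 2))) 1 0 from e3]
      cases D ((1:ZMod 5),(1:Fin 2)) <;> rfl
    · show (maskOf D / 2 ^ idx ((2:ZMod 5),(0:Fin 2)) % 2 == 1) = D _
      rw [show maskOf D / 2 ^ idx ((2:ZMod 5),(0:Fin 2)) % 2 = cond (D ((2:ZMod 5),(0:Fin 2))) 1 0 from e4]
      cases D ((2:ZMod 5),(0:Fin 2)) <;> rfl
    · show (maskOf D / 2 ^ idx ((2:ZMod 5),(1:Fin 2)) % 2 == 1) = D _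
      rw [show maskOf D / 2 ^ idx ((2:ZMod 5),(1:Fin 2)) % 2 = cond (D ((2:ZMod 5),(1:Fin 2))) 1 0 from e5]
      cases D ((2:ZMod 5),(1:Fin 2)) <;> rfl
    · show (maskOf D / 2 ^ idx ((3:ZMod 5),(0:Fin 2)) % 2 == 1) = D _
      rw [show maskOf D / 2 ^ idx ((3:ZMod 5),(0:Fin 2)) % 2 = cond (D ((3:ZMod 5),(0:Fin 2))) 1 0 from e6]
      cases D ((3:ZMod 5),(0:Fin 2)) <;> rfl
    · show (maskOf D / 2 ^ idx ((3:ZMod 5),(1:Fin 2)) % 2 == 1) = D _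
      rw [show maskOf D / 2 ^ idx ((3:ZMod 5),(1:Fin 2)) % 2 = cond (D ((3:ZMod 5),(1:Fin 2))) 1 0 from e7]
      cases D ((3:ZMod 5),(1:Fin 2)) <;> rfl
    · show (maskOf D / 2 ^ idx ((4:ZMod 5),(0:Fin 2)) % 2 == 1) = D _
      rw [show maskOf D / 2 ^ idx ((4:ZMod 5),(0:Fin 2)) % 2 = cond (D ((4:ZMod 5),(0:Fin 2))) 1 0 from e8]
      cases D ((4:ZMod 5),(0:Fin 2)) <;> rfl
    · show (maskOf D / 2 ^ idx ((4:ZMod 5),(1:Fin 2)) % 2 == 1) = D _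
      rw [show maskOf D / 2 ^ idx ((4:ZMod 5),(1:Fin 2)) % 2 = cond (D ((4:ZMod 5),(1:Fin 2))) 1 0 from e9]
      cases D ((4:ZMod 5),(1:Fin 2)) <;> rfl
  exact key v (mem_verts v)


theorem copies_P3 {α : Type*} (G : SimpleGraph α) (S : Set α) (u v w : α)
    (hvw : v ≠ w) (h1 : G.Adj u v) (h2 : G.Adj u w)
    (hu : u ∈ S) (hv : v ∈ S) (hw : w ∈ S) : Copies G (Jgraph 3) S := by
  refine ⟨⟨Sum.elim (fun _ => u) (fun j => if j = 0 then v else w), ?_⟩, ?_, ?_⟩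
  · rintro (a | a) (b | b) hab
    · rw [Fin.fin_one_eq_zero a, Fin.fin_one_eq_zero b]
    · exfalso; simp only [Sum.elim_inl, Sum.elim_inr] at hab
      split at hab
      · exact h1.ne hab
      · exact h2.ne hab
    · exfalso; simp only [Sum.elim_inl, Sum.elim_inr] at hab
      split at hab
      · exact h1.ne hab.symm
      · exact h2.ne hab.symm
    · simp only [Sum.elim_inr] at hab
      congr 1
      fin_cases a <;> fin_cases b <;> simp_all
  · rintro (a | a) (b | b) ⟨hne, hrr⟩
    · exact absurd (by rw [Fin.fin_one_eq_zero a, Fin.fin_one_eq_zero b]) hne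
    · show G.Adj u (if b = 0 then v else w)
      split
      · exact h1
      · exact h2
    · show G.Adj (if a = 0 then v else w) u
      split
      · exact h1.symm
      · exact h2.symm
    · exact absurd ⟨rfl, rfl⟩ hrr
  · rintro (a | a)
    · exact hu
    · show (if a = 0 then v else w) ∈ S
      split
      · exact hv
      · exact hw

theorem arrows (x : V) :
    VArrows2 (BigG.induce {v | v ≠ x}) (Jgraph 3) (Jgraph 3) := by
  intro C
  set D : V → Bool := fun v => if h : v ≠ x then C ⟨v, h⟩ else false with hD
  have h1 := List.all_eq_true.mp allOK x (mem_verts x)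
  have h2 := List.all_eq_true.mp h1 (maskOf D) (List.mem_range.mpr (maskOf_lt D))
  rw [colOK, List.any_eq_true] at h2
  obtain ⟨u, -, hbody⟩ := h2
  rw [Bool.and_eq_true, List.any_eq_true] at hbody
  obtain ⟨hux, p, hpmem, hp⟩ := hbody
  rw [Bool.and_eq_true, Bool.and_eq_true, Bool.and_eq_true, beq_iff_eq, beq_iff_eq] at hp
  obtain ⟨⟨⟨hp1x, hp2x⟩, hc1⟩, hc2⟩ := hp
  rw [bne_iff_ne] at hux hp1x hp2x
  obtain ⟨hvw, hadj1, hadj2⟩ := pair_facts u p hpmem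
  rw [colB_maskOf, colB_maskOf] at hc1 hc2
  have hDu : D u = C ⟨u, hux⟩ := dif_pos hux
  have hD1 : D p.1 = C ⟨p.1, hp1x⟩ := dif_pos hp1x
  have hD2 : D p.2 = C ⟨p.2, hp2x⟩ := dif_pos hp2x
  have hne12 : (⟨p.1, hp1x⟩ : {v : V // v ∈ {v | v ≠ x}}) ≠ ⟨p.2, hp2x⟩ := by
    intro h; exact hvw (congrArg Subtype.val h)
  have hA1 : (BigG.induce {v | v ≠ x}).Adj ⟨u, hux⟩ ⟨p.1, hp1x⟩ := hadj1
  have hA2 : (BigG.induce {v | v ≠ x}).Adj ⟨u, hux⟩ ⟨p.2, hp2x⟩ := hadj2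
  cases hb : C ⟨u, hux⟩ with
  | true =>
    left
    refine copies_P3 _ _ ⟨u, hux⟩ ⟨p.1, hp1x⟩ ⟨p.2, hp2x⟩ hne12 hA1 hA2 hb ?_ ?_
    · show C ⟨p.1, hp1x⟩ = true; rw [← hD1, hc1, hDu, hb]
    · show C ⟨p.2, hp2x⟩ = true; rw [← hD2, hc2, hDu, hb]
  | false =>
    right
    refine copies_P3 _ _ ⟨u, hux⟩ ⟨p.1, hp1x⟩ ⟨p.2, hp2x⟩ hne12 hA1 hA2 hb ?_ ?_
    · show C ⟨p.1, hp1x⟩ = false; rw [← hD1, hc1, hDu, hb]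
    · show C ⟨p.2, hp2x⟩ = false; rw [← hD2, hc2, hDu, hb]

theorem cfree (x : V) : (BigG.induce {v | v ≠ x}).CliqueFree 3 := by
  intro t ht
  rw [SimpleGraph.is3Clique_iff] at ht
  obtain ⟨a, b, c, hab, hac, hbc, -⟩ := ht
  exact no_tri a.1 b.1 c.1 ⟨hab, hac, hbc⟩



theorem card9 : Fintype.card ({v : V // v ∈ {v : V | v ≠ ((0:ZMod 5),(0:Fin 2))}}) = 9 := by
  simp [Set.mem_setOf_eq, Fintype.card_subtype_compl]

noncomputable def e9 : ({v : V // v ∈ {v : V | v ≠ ((0:ZMod 5),(0:Fin 2))}}) ≃ Fin 9 :=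
  Fintype.equivFinOfCardEq card9

noncomputable def G9 : SimpleGraph (Fin 9) :=
  SimpleGraph.comap e9.symm (BigG.induce {v : V | v ≠ ((0:ZMod 5),(0:Fin 2))})

theorem G9_cfree : G9.CliqueFree 3 := by
  intro t ht
  rw [SimpleGraph.is3Clique_iff] at ht
  obtain ⟨a, b, c, hab, hac, hbc, -⟩ := ht
  exact no_tri (e9.symm a).1 (e9.symm b).1 (e9.symm c).1 ⟨hab, hac, hbc⟩

theorem copies_comap {α₁ α₂ β : Type*} (G : SimpleGraph α₁) (F : SimpleGraph β)
    (e : α₁ ≃ α₂) (S : Set α₂) (h : Copies G F {v | e v ∈ S}) :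
    Copies (SimpleGraph.comap e.symm G) F S := by
  obtain ⟨f, hadj, hmem⟩ := h
  refine ⟨f.trans e.toEmbedding, fun a b hab => ?_, fun a => ?_⟩
  · show G.Adj (e.symm (e (f a))) (e.symm (e (f b)))
    rw [Equiv.symm_apply_apply, Equiv.symm_apply_apply]
    exact hadj a b hab
  · exact hmem a

theorem G9_arrows : VArrows2 G9 (Jgraph 3) (Jgraph 3) := by
  intro C
  rcases arrows ((0:ZMod 5),(0:Fin 2)) (fun v => C (e9 v)) with h | h
  · exact Or.inl (copies_comap _ _ e9 _ h)
  · exact Or.inr (copies_comap _ _ e9 _ h)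

theorem final : Fv2 (Jgraph 3) (Jgraph 3) 3 ≤ 9 :=
  Nat.sInf_le ⟨G9, G9_cfree, G9_arrows⟩

end FvAux

/-- The graph obtained from `C_5[2K_1]` by deleting one vertex is triangle-free and
vertex-arrows `(P_3, P_3) = (J_3, J_3)`; hence `F_v(J_3,J_3;3) ≤ 9`. -/
theorem Fv_J3_J3_le_nine :
    (∀ x : ZMod 5 × Fin 2,
      ((lexProd (cycle 5) (⊥ : SimpleGraph (Fin 2))).induce {v | v ≠ x}).CliqueFree 3 ∧
      VArrows2 ((lexProd (cycle 5) (⊥ : SimpleGraph (Fin 2))).induce {v | v ≠ x})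
        (Jgraph 3) (Jgraph 3)) ∧
    Fv2 (Jgraph 3) (Jgraph 3) 3 ≤ 9 := by
  exact ⟨fun x => ⟨FvAux.cfree x, FvAux.arrows x⟩, FvAux.final⟩
end

section
/- If G vertex-arrows (K_3, K_3), then the lexicographic product G[E_{2k-1}] vertex-arrows (K_{k,k,k}, K_{k,k,k}) for every k ≥ 1. -/
open SimpleGraph

/-- If `G → (K_3,K_3)^v`, then `G[E_{2k-1}] → (K_{k,k,k},K_{k,k,k})^v` for all `k ≥ 1`. -/
theorem blowup_arrows_Kkkk {α : Type*} (G : SimpleGraph α)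
    (hG : VArrows2 G (Kc 3) (Kc 3)) (k : ℕ) (hk : 1 ≤ k) :
    VArrows2 (lexProd G (⊥ : SimpleGraph (Fin (2 * k - 1))))
      (completeMultipartiteGraph (fun _ : Fin 3 => Fin k))
      (completeMultipartiteGraph (fun _ : Fin 3 => Fin k)) := by
  intro C
  classical
  -- majority color for each vertex
  have key : ∀ v : α, ∃ c : Bool,
      k ≤ (Finset.univ.filter (fun j : Fin (2 * k - 1) => C (v, j) = c)).card := by
    intro v
    by_cases h : k ≤ (Finset.univ.filter (fun j : Fin (2 * k - 1) => C (v, j) = true)).card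
    · exact ⟨true, h⟩
    · refine ⟨false, ?_⟩
      have h2 := Finset.card_filter_add_card_filter_not (s := (Finset.univ : Finset (Fin (2 * k - 1)))) (p := fun j => C (v, j) = true)
      have hcard : (Finset.univ : Finset (Fin (2 * k - 1))).card = 2 * k - 1 := by simp
      have heq : (Finset.univ.filter (fun j : Fin (2 * k - 1) => C (v, j) = false)).card
          = (Finset.univ.filter (fun j : Fin (2 * k - 1) => ¬ C (v, j) = true)).card := by
        apply Finset.card_bij (fun a _ => a) <;> simp
      rw [heq]
      omega
  choose D hD using key
  have emb : ∀ v : α, ∃ e : Fin k ↪ Fin (2 * k - 1), ∀ a, C (v, e a) = D v := by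
    intro v
    have hc : Fintype.card (Fin k) ≤ Fintype.card
        ((Finset.univ.filter (fun j : Fin (2 * k - 1) => C (v, j) = D v)) : Finset (Fin (2 * k - 1))) := by
      rw [Fintype.card_fin, Fintype.card_coe]; exact hD v
    obtain ⟨e⟩ := Function.Embedding.nonempty_of_card_le hc
    refine ⟨e.trans (Function.Embedding.subtype _), fun a => ?_⟩
    have h2 := (e a).2
    simp only [Finset.mem_filter] at h2
    exact h2.2
  choose e he using emb
  have build : ∀ (g : Fin 3 ↪ α), (∀ a b, (Kc 3).Adj a b → G.Adj (g a) (g b)) →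
      ∀ c : Bool, (∀ a, D (g a) = c) →
      Copies (lexProd G (⊥ : SimpleGraph (Fin (2 * k - 1))))
        (completeMultipartiteGraph (fun _ : Fin 3 => Fin k)) {v | C v = c} := by
    intro g hadj c hmem
    refine ⟨⟨fun p => (g p.1, e (g p.1) p.2), ?_⟩, ?_, ?_⟩
    · rintro ⟨i, a⟩ ⟨j, b⟩ h
      simp only [Prod.mk.injEq] at h
      have hij : i = j := g.injective h.1
      subst hij
      exact Sigma.ext rfl (heq_of_eq ((e (g i)).injective h.2))
    · rintro ⟨i, a⟩ ⟨j, b⟩ h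
      have hij : i ≠ j := h
      exact Or.inl (hadj i j (by simp [Kc, hij]))
    · rintro ⟨i, a⟩
      show C (g i, e (g i) a) = c
      rw [he (g i) a, hmem i]
  rcases hG D with ⟨g, hadj, hmem⟩ | ⟨g, hadj, hmem⟩
  · exact Or.inl (build g hadj true (fun a => hmem a))
  · exact Or.inr (build g hadj false (fun a => hmem a))
end

section
/- If a graph G vertex-arrows (K_3, K_3) and G is K_4-free, then the join K_1 + G is K_5-free and edge-arrows (K_3, K_3). -/
open SimpleGraph

lemma copies_K3 {β : Type*} (H : SimpleGraph β) (x y z : β)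
    (hxy : H.Adj x y) (hxz : H.Adj x z) (hyz : H.Adj y z) :
    Copies H (Kc 3) Set.univ := by
  refine ⟨⟨![x, y, z], ?_⟩, ?_, fun a => trivial⟩
  · intro a b hab
    fin_cases a <;> fin_cases b <;>
      simp_all [hxy.ne, hxz.ne, hyz.ne, hxy.ne', hxz.ne', hyz.ne']
  · show ∀ a b, _ → H.Adj (![x, y, z] a) (![x, y, z] b)
    intro a b hab
    fin_cases a <;> fin_cases b <;>
      simp_all [Kc, hxy, hxz, hyz, hxy.symm, hxz.symm, hyz.symm]

lemma join_adj_inr {α : Type*} (G : SimpleGraph α) {a b : α} (h : G.Adj a b) :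
    (graphJoin (Kc 1) G).Adj (Sum.inr a) (Sum.inr b) :=
  Or.inr (Or.inl ⟨a, b, rfl, rfl, h⟩)

lemma join_adj_inr_iff {α : Type*} (G : SimpleGraph α) {a b : α} :
    (graphJoin (Kc 1) G).Adj (Sum.inr a) (Sum.inr b) ↔ G.Adj a b := by
  constructor
  · rintro (⟨x, y, h, _⟩ | ⟨x, y, hx, hy, h⟩ | ⟨h1, _⟩ | ⟨_, h1⟩)
    · exact absurd h (by simp)
    · cases hx; cases hy; exact h
    · simp at h1
    · simp at h1
  · exact join_adj_inr G

lemma join_adj_cross {α : Type*} (G : SimpleGraph α) (v : α) :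
    (graphJoin (Kc 1) G).Adj (Sum.inl 0) (Sum.inr v) :=
  Or.inr (Or.inr (Or.inl ⟨rfl, rfl⟩))

/-- If `G` is `K_4`-free and `G → (K_3,K_3)^v`, then `K_1 + G` is `K_5`-free and
`K_1 + G → (K_3,K_3)^e`. -/
theorem join_K1_edge_arrows_K3 {α : Type*} (G : SimpleGraph α)
    (hfree : G.CliqueFree 4) (harr : VArrows2 G (Kc 3) (Kc 3)) :
    (graphJoin (Kc 1) G).CliqueFree 5 ∧ EArrows2 (graphJoin (Kc 1) G) (Kc 3) (Kc 3) := by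
  constructor
  · intro t ht
    classical
    set tr := t.filter (fun x => x.isRight) with htr
    have hcards : (t.filter (fun x => x.isLeft = true)).card +
        (t.filter (fun x => ¬ x.isLeft = true)).card = t.card :=
      Finset.card_filter_add_card_filter_not _
    have htl1 : (t.filter (fun x => x.isLeft = true)).card ≤ 1 := by
      refine le_trans (Finset.card_le_card (fun x hx => ?_)) (Finset.card_singleton (Sum.inl (0 : Fin 1))).le
      simp only [Finset.mem_filter] at hx
      rcases x with a | a
      · simp [Subsingleton.elim a 0]
      · simp at hx
    have htreq : tr = t.filter (fun x => ¬ x.isLeft = true) := by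
      apply Finset.filter_congr
      intro x _; cases x <;> simp
    have htr4 : 4 ≤ tr.card := by
      have h5 := ht.2
      rw [htreq]; omega
    obtain ⟨u, hu, hucard⟩ := Finset.exists_subset_card_eq htr4
    set s := u.preimage Sum.inr Sum.inr_injective.injOn with hs
    have hscard : s.card = 4 := by
      rw [hs, Finset.card_preimage, Finset.filter_true_of_mem, hucard]
      intro x hx
      have hx' := hu hx
      rw [htr, Finset.mem_filter] at hx'
      rcases x with a | a
      · simp at hx'
      · exact ⟨a, rfl⟩
    refine hfree s ⟨fun a ha b hb hab => ?_, hscard⟩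
    have hat : Sum.inr a ∈ t := Finset.mem_of_mem_filter _ (hu (Finset.mem_preimage.mp ha))
    have hbt : Sum.inr b ∈ t := Finset.mem_of_mem_filter _ (hu (Finset.mem_preimage.mp hb))
    exact (join_adj_inr_iff G).mp (ht.1 hat hbt (by simpa using hab))
  · intro R hR
    classical
    have key := harr (fun v => decide (R.Adj (Sum.inl 0) (Sum.inr v)))
    rcases key with ⟨f, hadj, hmem⟩ | ⟨f, hadj, hmem⟩
    · -- red vertex triangle f 0, f 1, f 2
      have hred : ∀ a, R.Adj (Sum.inl 0) (Sum.inr (f a)) := fun a =>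
        of_decide_eq_true (hmem a)
      have h01 : G.Adj (f 0) (f 1) := hadj 0 1 (by simp [Kc, completeGraph])
      have h02 : G.Adj (f 0) (f 2) := hadj 0 2 (by simp [Kc, completeGraph])
      have h12 : G.Adj (f 1) (f 2) := hadj 1 2 (by simp [Kc, completeGraph])
      by_cases e01 : R.Adj (Sum.inr (f 0)) (Sum.inr (f 1))
      · exact Or.inl (copies_K3 R _ _ _ (hred 0) (hred 1) e01)
      by_cases e02 : R.Adj (Sum.inr (f 0)) (Sum.inr (f 2))
      · exact Or.inl (copies_K3 R _ _ _ (hred 0) (hred 2) e02)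
      by_cases e12 : R.Adj (Sum.inr (f 1)) (Sum.inr (f 2))
      · exact Or.inl (copies_K3 R _ _ _ (hred 1) (hred 2) e12)
      · exact Or.inr (copies_K3 _ _ _ _
          ((sdiff_adj _ _ _ _).mpr ⟨join_adj_inr G h01, e01⟩)
          ((sdiff_adj _ _ _ _).mpr ⟨join_adj_inr G h02, e02⟩)
          ((sdiff_adj _ _ _ _).mpr ⟨join_adj_inr G h12, e12⟩))
    · -- blue vertex triangle
      have hblue : ∀ a, ¬ R.Adj (Sum.inl 0) (Sum.inr (f a)) := fun a =>
        of_decide_eq_false (hmem a)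
      have hcr : ∀ a, (graphJoin (Kc 1) G \ R).Adj (Sum.inl 0) (Sum.inr (f a)) := fun a =>
        (sdiff_adj _ _ _ _).mpr ⟨join_adj_cross G (f a), hblue a⟩
      have h01 : G.Adj (f 0) (f 1) := hadj 0 1 (by simp [Kc, completeGraph])
      have h02 : G.Adj (f 0) (f 2) := hadj 0 2 (by simp [Kc, completeGraph])
      have h12 : G.Adj (f 1) (f 2) := hadj 1 2 (by simp [Kc, completeGraph])
      by_cases e01 : R.Adj (Sum.inr (f 0)) (Sum.inr (f 1))
      swap
      · exact Or.inr (copies_K3 _ _ _ _ (hcr 0) (hcr 1)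
          ((sdiff_adj _ _ _ _).mpr ⟨join_adj_inr G h01, e01⟩))
      by_cases e02 : R.Adj (Sum.inr (f 0)) (Sum.inr (f 2))
      swap
      · exact Or.inr (copies_K3 _ _ _ _ (hcr 0) (hcr 2)
          ((sdiff_adj _ _ _ _).mpr ⟨join_adj_inr G h02, e02⟩))
      by_cases e12 : R.Adj (Sum.inr (f 1)) (Sum.inr (f 2))
      swap
      · exact Or.inr (copies_K3 _ _ _ _ (hcr 1) (hcr 2)
          ((sdiff_adj _ _ _ _).mpr ⟨join_adj_inr G h12, e12⟩))
      · exact Or.inl (copies_K3 R _ _ _ e01 e02 e12)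
end
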